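/- Let b be a prime, m, s, d, τ ∈ ℕ with τ + 1 ≤ ds, α ≥ 1 an integer, p ∈ F_b[x] irreducible with deg(p) = m, γ = (γ_w) nonnegative weights, λ a real with 1/(2min(α,d)+1) < λ ≤ 1, and q_τ = (q_1,...,q_τ) ∈ R_{b,m}^τ. For q̃ ∈ R_{b,m} define θ(q̃) = Σ_{u⊆{1,...,τ}} 4^{|v(u∪{τ+1})| max(d-α,0)} γ_{v(u∪{τ+1})} Σ over all ((k_j)_{j∈u}, k_{τ+1}) ∈ ℕ^u × ℕ with Σ_{j∈u} tr_m(k_j) q_j + tr_m(k_{τ+1}) q̃ ≡ 0 (mod p) of [Π_{j∈u} r_{α,d}(k_j)] · r_{α,d}(k_{τ+1}). Then there exists q̃ ∈ R_{b,m} such that θ(q̃)^λ ≤ (1/(b^m - 1)) Σ_{u⊆{1,...,τ}} 4^{λ|v(u∪{τ+1})| max(d-α,0)} γ_{v(u∪{τ+1})}^λ C̃_{α,d,λ}^{|u|+1}. -/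

import Mathlib

open scoped Classical
open Polynomial
open scoped NNReal ENNReal

noncomputable section

namespace ISPLR

/-- `digit b k i` is the `i`-th base-`b` digit of `k`. -/
def digit (b k i : ℕ) : ℕ := k / b ^ i % b

/-- `trunc b m k` is the truncated polynomial `tr_m(k) ∈ F_b[x]`. -/
def trunc (b m k : ℕ) : Polynomial (ZMod b) :=
  ∑ i ∈ Finset.range m, Polynomial.C ((digit b k i : ZMod b)) * Polynomial.X ^ i

/-- `mu b k = ⌊log_b k⌋` for `k ≥ 1`. -/
def mu (b k : ℕ) : ℕ := Nat.log b k

/-- `r_{α,d}(k)`. -/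
def rfun (b α d k : ℕ) : ℝ :=
  if k = 0 then 1 else (b : ℝ) ^ (-(((2 * min α d + 1) * mu b k : ℕ) : ℤ))

/-- `blk d u = v(u)`: the set of coordinates `i` whose block `{(i-1)d+1,...,id}` meets `u`. -/
def blk (d : ℕ) (u : Finset ℕ) : Finset ℕ := u.image fun j => (j - 1) / d + 1

/-- The quality criterion `B_{α,d,γ}((q_1,...,q_τ), p)`. -/
def Bcrit (b α d m : ℕ) (γ : Finset ℕ → ℝ) (p : Polynomial (ZMod b))
    (τ : ℕ) (q : ℕ → Polynomial (ZMod b)) : ℝ :=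
  ∑ u ∈ (Finset.Icc 1 τ).powerset.filter fun u => u ≠ ∅,
    (4 : ℝ) ^ ((blk d u).card * (d - α)) * γ (blk d u) *
      ∑' k : ↥u → ℕ,
        (if (∀ j, 1 ≤ k j) ∧ p ∣ ∑ j, trunc b m (k j) * q (j : ℕ)
         then ∏ j, rfun b α d (k j) else 0)

/-- Membership in `R_{b,m}`: nonzero polynomials of degree `< m`. -/
def Rbm (b m : ℕ) (q : Polynomial (ZMod b)) : Prop :=
  q ≠ 0 ∧ q.degree < (m : WithBot ℕ)

/-- `R_{b,m}` as a finset. -/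
def Rfin (b m : ℕ) : Finset (Polynomial (ZMod b)) :=
  ((Finset.range (b ^ m)).filter fun n => n ≠ 0).image (trunc b m)

/-- The CBC construction: `q 1 = 1`, every component lies in `R_{b,m}`, and each `q τ`
minimizes the quality criterion given the previous components. -/
def CBC (b α d m ds : ℕ) (γ : Finset ℕ → ℝ) (p : Polynomial (ZMod b))
    (q : ℕ → Polynomial (ZMod b)) : Prop :=
  q 1 = 1 ∧ (∀ τ, 1 ≤ τ → τ ≤ ds → Rbm b m (q τ)) ∧
    ∀ τ, 2 ≤ τ → τ ≤ ds → ∀ q' : Polynomial (ZMod b), Rbm b m q' →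
      Bcrit b α d m γ p τ q ≤ Bcrit b α d m γ p τ (Function.update q τ q')

/-- `C̃_{α,d,λ}`. -/
def Ctilde (b α d : ℕ) (lam : ℝ) : ℝ :=
  max ((((b : ℝ) - 1) / (1 - (b : ℝ) ^ (-(2 * ((min α d : ℕ) : ℤ))))) ^ lam)
      (((b : ℝ) - 1) / (1 - (b : ℝ) ^ ((1 : ℝ) - (2 * ((min α d : ℕ) : ℝ) + 1) * lam)))

/-- `C_{α,d,λ,a}`. -/
def Cconst (b α d : ℕ) (lam : ℝ) (a : ℕ) : ℝ :=
  (4 : ℝ) ^ (lam * ((d - α : ℕ) : ℝ)) * (-1 + (1 + Ctilde b α d lam) ^ a)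

/-- `φ_{α,d}(z)`. -/
def phi (b α d : ℕ) (z : ℝ) : ℝ :=
  if z = 0 then ((b : ℝ) - 1) / (1 - (b : ℝ) ^ (-(2 * ((min α d : ℕ) : ℤ))))
  else ((b : ℝ) - 1 - (b : ℝ) ^ (2 * ((min α d : ℕ) : ℤ) * ⌊Real.logb b z⌋) *
      ((b : ℝ) ^ (2 * min α d + 1) - 1)) /
    (1 - (b : ℝ) ^ (-(2 * ((min α d : ℕ) : ℤ))))

/-- The `l`-th coefficient `t_l` of the Laurent expansion `g/p = Σ_{l} t_l x^{-l}`
(for `l ≥ 1`; the coefficients with `l ≥ 1` only depend on `g % p`, and are obtained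
as power-series coefficients after the substitution `y = x^{-1}`). -/
def lcoeff (b : ℕ) [Fact (Nat.Prime b)] (m : ℕ) (p g : Polynomial (ZMod b)) (l : ℕ) : ZMod b :=
  PowerSeries.coeff (R := ZMod b) l
    (PowerSeries.X * (((g % p).reflect (m - 1) : Polynomial (ZMod b)) : PowerSeries (ZMod b)) *
      (((p.reflect m : Polynomial (ZMod b)) : PowerSeries (ZMod b)))⁻¹)

/-- `v_m(g/p) = Σ_{l=1}^m t_l b^{-l}`. -/
def vmap (b : ℕ) [Fact (Nat.Prime b)] (m : ℕ) (p g : Polynomial (ZMod b)) : ℝ :=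
  ∑ l ∈ Finset.Icc 1 m, ((lcoeff b m p g l).val : ℝ) / (b : ℝ) ^ l

/-- The `j`-th coordinate `z_{n,j} = v_m(n(x) q_j(x)/p(x))` of the `n`-th point of the
polynomial lattice point set with modulus `p` and generating polynomial `qj`. -/
def plp (b : ℕ) [Fact (Nat.Prime b)] (m : ℕ) (p qj : Polynomial (ZMod b)) (n : ℕ) : ℝ :=
  vmap b m p (trunc b m n * qj)

/-- The `i`-th base-`b` digit (for `i ≥ 1`) of a real number `x ∈ [0,1)`, taken from the
expansion in which infinitely many digits differ from `b - 1`. -/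
def rdigit (b : ℕ) (x : ℝ) (i : ℕ) : ℕ := (⌊x * (b : ℝ) ^ i⌋.toNat) % b

/-- The `k`-th base-`b` Walsh function. -/
def walsh (b k : ℕ) (x : ℝ) : ℂ :=
  Complex.exp (2 * (Real.pi : ℂ) * Complex.I *
    (((∑ a ∈ Finset.range (Nat.log b k + 1), rdigit b x (a + 1) * digit b k a : ℕ)) : ℂ) / (b : ℂ))

/-- `θ(q̃)`: the part of the quality criterion involving the new component `q̃` at index `τ+1`. -/
def theta (b α d m τ : ℕ) (γ : Finset ℕ → ℝ) (p : Polynomial (ZMod b))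
    (q : ℕ → Polynomial (ZMod b)) (qt : Polynomial (ZMod b)) : ℝ :=
  ∑ u ∈ (Finset.Icc 1 τ).powerset,
    (4 : ℝ) ^ ((blk d (insert (τ + 1) u)).card * (d - α)) * γ (blk d (insert (τ + 1) u)) *
      ∑' kk : (↥u → ℕ) × ℕ,
        (if (∀ j, 1 ≤ kk.1 j) ∧ 1 ≤ kk.2 ∧
            p ∣ ((∑ j, trunc b m (kk.1 j) * q (j : ℕ)) + trunc b m kk.2 * qt)
         then (∏ j, rfun b α d (kk.1 j)) * rfun b α d kk.2 else 0)

lemma digit_lt {b : ℕ} (hb : 2 ≤ b) (k i : ℕ) : digit b k i < b :=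
  Nat.mod_lt _ (by omega)

lemma digits_zero_iff {b : ℕ} (hb : 2 ≤ b) (m k : ℕ) :
    (∀ i < m, digit b k i = 0) ↔ b ^ m ∣ k := by
  induction m with
  | zero => simp
  | succ m ih =>
    constructor
    · intro h
      have hm : b ^ m ∣ k := ih.mp fun i hi => h i (by omega)
      have hd : digit b k m = 0 := h m (by omega)
      have : b ∣ k / b ^ m := Nat.dvd_of_mod_eq_zero hd
      have := Nat.mul_dvd_of_dvd_div hm this
      rwa [pow_succ]
    · intro h i hi
      rcases Nat.lt_succ_iff_lt_or_eq.mp hi with hi | rfl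
      · exact (ih.mpr (dvd_trans (pow_dvd_pow b (by omega)) h)) i hi
      · obtain ⟨t, rfl⟩ := h
        unfold digit
        rw [pow_succ, mul_assoc, Nat.mul_div_cancel_left _ (Nat.pow_pos (by omega) : 0 < b ^ i), Nat.mul_mod_right]

lemma trunc_coeff (b m k j : ℕ) :
    (trunc b m k).coeff j = if j < m then ((digit b k j : ZMod b)) else 0 := by
  unfold trunc
  simp_rw [Polynomial.C_mul_X_pow_eq_monomial, Polynomial.finset_sum_coeff,
    Polynomial.coeff_monomial]
  rw [Finset.sum_ite_eq' (Finset.range m) j]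
  simp [Finset.mem_range]

lemma trunc_eq_zero_iff {b : ℕ} (hb : b.Prime) (m k : ℕ) :
    trunc b m k = 0 ↔ b ^ m ∣ k := by
  haveI : NeZero b := ⟨hb.ne_zero⟩
  rw [← digits_zero_iff hb.two_le]
  constructor
  · intro h i hi
    have := congrArg (fun q => Polynomial.coeff q i) h
    simp only [trunc_coeff, Polynomial.coeff_zero, if_pos hi] at this
    rw [ZMod.natCast_eq_zero_iff] at this
    exact Nat.eq_zero_of_dvd_of_lt this (digit_lt hb.two_le k i)
  · intro h
    ext j
    rw [trunc_coeff]
    split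
    · rename_i hj
      rw [h j hj]; simp
    · simp

lemma trunc_degree_lt (b m k : ℕ) : (trunc b m k).degree < (m : WithBot ℕ) := by
  apply lt_of_le_of_lt (Polynomial.degree_sum_le _ _)
  rw [Finset.sup_lt_iff (by exact WithBot.bot_lt_coe m)]
  intro i hi
  apply lt_of_le_of_lt (Polynomial.degree_C_mul_X_pow_le _ _)
  exact_mod_cast WithBot.coe_lt_coe.mpr (Finset.mem_range.mp hi)

lemma trunc_zero (b m : ℕ) : trunc b m 0 = 0 := by
  unfold trunc
  simp [digit]

lemma mu_pow_mul {b : ℕ} (hb : 2 ≤ b) (m : ℕ) {k : ℕ} (hk : k ≠ 0) :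
    mu b (b ^ m * k) = m + mu b k := by
  unfold mu
  apply Nat.log_eq_of_pow_le_of_lt_pow
  · rw [pow_add]
    exact Nat.mul_le_mul_left _ (Nat.pow_log_le_self b hk)
  · rw [add_assoc, pow_add]
    have h1 : k < b ^ (Nat.log b k + 1) := Nat.lt_pow_succ_log_self (by omega) k
    have h2 : b ^ m * k < b ^ m * b ^ (Nat.log b k + 1) :=
      (Nat.mul_lt_mul_left (by positivity)).mpr h1
    exact h2

/-- general ENNReal tsum-Jensen -/
lemma tsum_rpow_le {ι : Type*} (f : ι → ℝ≥0∞) {t : ℝ} (ht : 0 < t) (ht1 : t ≤ 1)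
    (hfin : ∑' i, f i ≠ ⊤) : (∑' i, f i) ^ t ≤ ∑' i, (f i) ^ t := by
  set x := ∑' i, f i with hx
  by_cases hx0 : x = 0
  · rw [hx0, ENNReal.zero_rpow_of_pos ht]
    exact zero_le
  · have key : ∀ i, (f i / x) * x ^ t ≤ (f i) ^ t := by
      intro i
      have hle : f i / x ≤ 1 := by
        rw [ENNReal.div_le_iff hx0 hfin, one_mul]
        exact ENNReal.le_tsum i
      have h1 : (f i / x) ^ t ≥ f i / x := by
        simpa using ENNReal.rpow_le_rpow_of_exponent_ge hle ht1 (z := t) (y := 1) |>.trans_eq (by simp)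
      calc (f i / x) * x ^ t ≤ (f i / x) ^ t * x ^ t := by
            exact mul_le_mul_left (by simpa using h1) _
        _ = ((f i / x) * x) ^ t := (ENNReal.mul_rpow_of_nonneg _ _ ht.le).symm
        _ = (f i) ^ t := by rw [ENNReal.div_mul_cancel hx0 hfin]
    calc x ^ t = (∑' i, f i * x⁻¹) * x ^ t := by
          rw [ENNReal.tsum_mul_right, ← hx, ENNReal.mul_inv_cancel hx0 hfin, one_mul]
      _ = ∑' i, (f i * x⁻¹) * x ^ t := (ENNReal.tsum_mul_right).symm
      _ ≤ ∑' i, (f i) ^ t := ENNReal.tsum_le_tsum (fun i => by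
          simpa [div_eq_mul_inv] using key i)

/-- finite real Jensen -/
lemma sum_rpow_le {ι : Type*} (s : Finset ι) (f : ι → ℝ) (hf : ∀ i ∈ s, 0 ≤ f i) {t : ℝ}
    (ht : 0 < t) (ht1 : t ≤ 1) : (∑ i ∈ s, f i) ^ t ≤ ∑ i ∈ s, f i ^ t := by
  classical
  induction s using Finset.cons_induction with
  | empty => simp [Real.zero_rpow ht.ne']
  | cons a s ha ih =>
    rw [Finset.sum_cons, Finset.sum_cons]
    have h0a : 0 ≤ f a := hf a (Finset.mem_cons_self a s)
    have h0s : 0 ≤ ∑ i ∈ s, f i := Finset.sum_nonneg fun i hi => hf i (Finset.mem_cons_of_mem hi)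
    have two : (f a + ∑ i ∈ s, f i) ^ t ≤ f a ^ t + (∑ i ∈ s, f i) ^ t := by
      have := NNReal.rpow_add_le_add_rpow (f a).toNNReal (∑ i ∈ s, f i).toNNReal ht.le ht1
      calc (f a + ∑ i ∈ s, f i) ^ t
          = (((f a).toNNReal + (∑ i ∈ s, f i).toNNReal : ℝ≥0) : ℝ) ^ t := by
            rw [NNReal.coe_add, Real.coe_toNNReal _ h0a, Real.coe_toNNReal _ h0s]
        _ = ((((f a).toNNReal + (∑ i ∈ s, f i).toNNReal) ^ t : ℝ≥0) : ℝ) := by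
            rw [← NNReal.coe_rpow]
        _ ≤ (((f a).toNNReal ^ t + (∑ i ∈ s, f i).toNNReal ^ t : ℝ≥0) : ℝ) := by
            exact_mod_cast this
        _ = f a ^ t + (∑ i ∈ s, f i) ^ t := by
            rw [NNReal.coe_add, NNReal.coe_rpow, NNReal.coe_rpow,
              Real.coe_toNNReal _ h0a, Real.coe_toNNReal _ h0s]
    exact two.trans (by gcongr; exact ih fun i hi => hf i (Finset.mem_cons_of_mem hi))

lemma tsum_toReal_ofReal {ι : Type*} (f : ι → ℝ) (hf : ∀ i, 0 ≤ f i) :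
    ∑' i, f i = (∑' i, ENNReal.ofReal (f i)).toReal := by
  by_cases hs : Summable f
  · rw [← ENNReal.ofReal_tsum_of_nonneg hf hs, ENNReal.toReal_ofReal (tsum_nonneg hf)]
  · rw [tsum_eq_zero_of_not_summable hs]
    have : ∑' i, ENNReal.ofReal (f i) = ⊤ := by
      by_contra h
      have h2 := ENNReal.summable_toReal h
      have : Summable f := by
        apply h2.congr
        intro i; exact ENNReal.toReal_ofReal (hf i)
      exact hs this
    rw [this]
    simp

lemma prod_rpow_ennreal {ι : Type*} (s : Finset ι) (f : ι → ℝ≥0∞) {t : ℝ} (ht : 0 ≤ t) :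
    (∏ i ∈ s, f i) ^ t = ∏ i ∈ s, (f i) ^ t := by
  classical
  induction s using Finset.cons_induction with
  | empty => simp [ENNReal.one_rpow]
  | cons a s ha ih => rw [Finset.prod_cons, Finset.prod_cons, ENNReal.mul_rpow_of_nonneg _ _ ht, ih]

lemma tsum_pi_fin (f : ℕ → ℝ≥0∞) : ∀ n, ∑' k : Fin n → ℕ, ∏ i, f (k i) = (∑' m, f m) ^ n := by
  intro n
  induction n with
  | zero =>
    rw [pow_zero]
    have : ∀ k : Fin 0 → ℕ, (∏ i, f (k i)) = 1 := by intro k; simp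
    rw [tsum_congr this]
    exact tsum_eq_single (fun i => i.elim0) (fun b hb => absurd (Subsingleton.elim b _) hb) |>.trans rfl
  | succ n ih =>
    have := ((Fin.consEquiv (fun _ : Fin (n+1) => ℕ)).tsum_eq (fun k : Fin (n+1) → ℕ => ∏ i, f (k i)))
    rw [← this]
    have heq : ∀ p : ℕ × (Fin n → ℕ),
        (∏ i, f (((Fin.consEquiv (fun _ : Fin (n+1) => ℕ)) p) i)) = f p.1 * ∏ i, f (p.2 i) := by
      intro p
      rw [Fin.prod_univ_succ]
      simp [Fin.consEquiv]
    rw [tsum_congr heq, ENNReal.tsum_prod']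
    simp_rw [ENNReal.tsum_mul_left, ENNReal.tsum_mul_right]
    rw [ih, pow_succ]
    ring

lemma tsum_pi_prod {ι : Type*} [Fintype ι] (f : ℕ → ℝ≥0∞) :
    ∑' k : ι → ℕ, ∏ i, f (k i) = (∑' n, f n) ^ (Fintype.card ι) := by
  classical
  set e := Fintype.equivFin ι
  have E := (Equiv.arrowCongr e.symm (Equiv.refl ℕ)).tsum_eq (fun k : ι → ℕ => ∏ i, f (k i))
  rw [← E]
  have heq : ∀ k' : Fin (Fintype.card ι) → ℕ,
      (∏ i, f ((Equiv.arrowCongr e.symm (Equiv.refl ℕ) k') i)) = ∏ j, f (k' j) := by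
    intro k'
    rw [← Equiv.prod_comp e (fun j => f (k' j))]
    apply Finset.prod_congr rfl
    intro i _
    simp [Equiv.arrowCongr]
  rw [tsum_congr heq, tsum_pi_fin]


section AuxC

lemma rfun_nonneg {b α d : ℕ} (k : ℕ) : 0 ≤ rfun b α d k := by
  unfold rfun
  split
  · norm_num
  · positivity

def hE (b α d : ℕ) (t : ℝ) (k : ℕ) : ℝ≥0∞ :=
  if k = 0 then 0 else ENNReal.ofReal (rfun b α d k ^ t)

def ffun (b α d : ℕ) (t : ℝ) (k : ℕ) : ℝ :=
  if k = 0 then 0 else (b : ℝ) ^ (-(((2 * min α d + 1) * mu b k : ℕ) : ℝ) * t)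

lemma rfun_rpow_eq {b α d : ℕ} (hb : 2 ≤ b) {k : ℕ} (hk : k ≠ 0) (t : ℝ) :
    rfun b α d k ^ t = (b : ℝ) ^ (-(((2 * min α d + 1) * mu b k : ℕ) : ℝ) * t) := by
  have hb0 : (0:ℝ) < b := by positivity
  unfold rfun
  rw [if_neg hk, ← Real.rpow_intCast (b:ℝ) _, ← Real.rpow_mul hb0.le]
  norm_num

lemma hE_eq_ofReal_ffun {b α d : ℕ} (hb : 2 ≤ b) (t : ℝ) (k : ℕ) :
    hE b α d t k = ENNReal.ofReal (ffun b α d t k) := by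
  unfold hE ffun
  rcases eq_or_ne k 0 with rfl | hk
  · simp
  · rw [if_neg hk, if_neg hk, rfun_rpow_eq hb hk t]

lemma ffun_nonneg {b α d : ℕ} (t : ℝ) (k : ℕ) : 0 ≤ ffun b α d t k := by
  unfold ffun
  split
  · norm_num
  · positivity

lemma geom_aux {ρ : ℝ} (hρ0 : 0 ≤ ρ) (hρ1 : ρ < 1) (N : ℕ) :
    ∑ n ∈ Finset.range N, ρ ^ n ≤ 1 / (1 - ρ) := by
  have hden : 0 < 1 - ρ := by linarith
  rw [le_div_iff₀ hden]
  have h := geom_sum_mul ρ N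
  have h2 : (∑ n ∈ Finset.range N, ρ ^ n) * (1 - ρ) = 1 - ρ ^ N := by linear_combination -h
  have h3 : 0 ≤ ρ ^ N := pow_nonneg hρ0 N
  linarith

lemma rpow_geom {b : ℝ} (hb0 : 0 < b) (Mr t : ℝ) (N : ℕ) :
    (b : ℝ) ^ (N : ℕ) * b ^ (-(Mr * N) * t) = (b ^ ((1:ℝ) - Mr * t)) ^ N := by
  rw [← Real.rpow_natCast b N, ← Real.rpow_add hb0,
    ← Real.rpow_natCast (b ^ ((1:ℝ) - Mr * t)) N, ← Real.rpow_mul hb0.le]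
  congr 1
  ring

lemma partial_sum_le {b α d : ℕ} (hb : 2 ≤ b) (t : ℝ) (N : ℕ) :
    ∑ k ∈ Finset.range (b ^ N), ffun b α d t k
      ≤ ((b:ℝ) - 1) * ∑ n ∈ Finset.range N,
          ((b:ℝ) ^ ((1:ℝ) - ((2 * min α d + 1 : ℕ) : ℝ) * t)) ^ n := by
  have hb0 : (0:ℝ) < b := by positivity
  induction N with
  | zero => simp [ffun]
  | succ N ih =>
    have hpowle : b ^ N ≤ b ^ (N+1) := Nat.pow_le_pow_right (by omega) (by omega)
    rw [Finset.range_eq_Ico, ← Finset.sum_Ico_consecutive _ (Nat.zero_le _) hpowle,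
      ← Finset.range_eq_Ico]
    have hconst : ∀ k ∈ Finset.Ico (b ^ N) (b ^ (N+1)),
        ffun b α d t k = (b : ℝ) ^ (-(((2 * min α d + 1) * N : ℕ) : ℝ) * t) := by
      intro k hk
      rw [Finset.mem_Ico] at hk
      have hbN : 0 < b ^ N := by positivity
      have hk0 : k ≠ 0 := by omega
      unfold ffun mu
      rw [if_neg hk0, Nat.log_eq_of_pow_le_of_lt_pow hk.1 hk.2]
    rw [Finset.sum_congr rfl hconst, Finset.sum_const, Finset.sum_range_succ, nsmul_eq_mul]
    have hcard : ((Finset.Ico (b ^ N) (b ^ (N+1))).card : ℝ) = (b:ℝ)^N * ((b:ℝ) - 1) := by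
      rw [Nat.card_Ico]
      have h1 : b ^ (N+1) - b ^ N = b ^ N * (b - 1) := by
        have : b ^ (N+1) = b ^ N * b := pow_succ b N
        rw [this, Nat.mul_sub_one]
      rw [h1]
      push_cast [Nat.cast_sub (by omega : 1 ≤ b)]
      ring
    have hexp : ((Finset.Ico (b ^ N) (b ^ (N+1))).card : ℝ)
          * (b : ℝ) ^ (-(((2 * min α d + 1) * N : ℕ) : ℝ) * t)
        = ((b:ℝ) - 1) * ((b:ℝ) ^ ((1:ℝ) - ((2 * min α d + 1 : ℕ) : ℝ) * t)) ^ N := by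
      rw [hcard]
      have hcst : (((2 * min α d + 1) * N : ℕ) : ℝ) = ((2 * min α d + 1 : ℕ) : ℝ) * (N : ℕ) := by
        push_cast
        ring
      rw [hcst, mul_comm ((b:ℝ)^N) ((b:ℝ) - 1), mul_assoc,
        rpow_geom hb0 ((2 * min α d + 1 : ℕ) : ℝ) t N]
    rw [hexp, mul_add]
    linarith [ih]

lemma sum_ffun_le {b α d : ℕ} (hb : 2 ≤ b) {t : ℝ}
    (hMt : 1 < (((2 * min α d + 1 : ℕ)) : ℝ) * t) (s : Finset ℕ) :
    ∑ k ∈ s, ffun b α d t k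
      ≤ ((b:ℝ) - 1) / (1 - (b:ℝ) ^ ((1:ℝ) - ((2 * min α d + 1 : ℕ) : ℝ) * t)) := by
  have hb0 : (0:ℝ) < b := by positivity
  have hb1 : (1:ℝ) < b := by exact_mod_cast hb
  set ρ : ℝ := (b:ℝ) ^ ((1:ℝ) - ((2 * min α d + 1 : ℕ) : ℝ) * t) with hρ
  have hρ0 : 0 ≤ ρ := Real.rpow_nonneg hb0.le _
  have hρ1 : ρ < 1 := Real.rpow_lt_one_of_one_lt_of_neg hb1 (by linarith)
  have hsub : s ⊆ Finset.range (b ^ (s.sup (Nat.log b) + 1)) := by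
    intro k hk
    refine Finset.mem_range.mpr (lt_of_lt_of_le (Nat.lt_pow_succ_log_self (by omega : 1 < b) k) ?_)
    refine Nat.pow_le_pow_right (by omega : 1 ≤ b) ?_
    have := Finset.le_sup (f := Nat.log b) hk
    omega
  calc ∑ k ∈ s, ffun b α d t k
      ≤ ∑ k ∈ Finset.range (b ^ (s.sup (Nat.log b) + 1)), ffun b α d t k :=
        Finset.sum_le_sum_of_subset_of_nonneg hsub (fun k _ _ => ffun_nonneg t k)
    _ ≤ ((b:ℝ) - 1) * ∑ n ∈ Finset.range (s.sup (Nat.log b) + 1), ρ ^ n :=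
        partial_sum_le hb t _
    _ ≤ ((b:ℝ) - 1) * (1 / (1 - ρ)) := by
        have := geom_aux hρ0 hρ1 (s.sup (Nat.log b) + 1)
        have hb1' : (0:ℝ) ≤ (b:ℝ) - 1 := by linarith
        exact mul_le_mul_of_nonneg_left this hb1'
    _ = ((b:ℝ) - 1) / (1 - ρ) := by ring

lemma tsum_hE_le {b α d : ℕ} (hb : 2 ≤ b) {t : ℝ}
    (hMt : 1 < (((2 * min α d + 1 : ℕ)) : ℝ) * t) :
    ∑' k, hE b α d t k ≤
      ENNReal.ofReal (((b:ℝ) - 1) / (1 - (b:ℝ) ^ ((1:ℝ) - ((2 * min α d + 1 : ℕ) : ℝ) * t))) := by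
  have h1 : ∀ k, hE b α d t k = ENNReal.ofReal (ffun b α d t k) := hE_eq_ofReal_ffun hb t
  rw [tsum_congr h1, ENNReal.tsum_eq_iSup_sum]
  apply iSup_le
  intro s
  rw [← ENNReal.ofReal_sum_of_nonneg (fun i _ => ffun_nonneg t i)]
  exact ENNReal.ofReal_le_ofReal (sum_ffun_le hb hMt s)

lemma hE_pow_mul {b α d : ℕ} (hb : 2 ≤ b) (t : ℝ) (m k : ℕ) :
    hE b α d t (b ^ m * k) =
      ENNReal.ofReal ((b:ℝ) ^ (-(((2 * min α d + 1) * m : ℕ) : ℝ) * t)) * hE b α d t k := by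
  have hb0 : (0:ℝ) < b := by positivity
  rcases eq_or_ne k 0 with rfl | hk
  · simp [hE]
  · have hbm : b ^ m * k ≠ 0 := by positivity
    unfold hE
    rw [if_neg hk, if_neg hbm, ← ENNReal.ofReal_mul (Real.rpow_nonneg hb0.le _)]
    congr 1
    rw [rfun_rpow_eq hb hbm t, rfun_rpow_eq hb hk t, ← Real.rpow_add hb0,
      mu_pow_mul hb m hk]
    congr 1
    push_cast
    ring

end AuxC

section AuxD
variable {b α d m : ℕ}

lemma card_mul_hE_le (hb : 2 ≤ b) {t : ℝ}
    (hMt : 1 ≤ (((2 * min α d + 1 : ℕ)) : ℝ) * t) :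
    ((b ^ m - 1 : ℕ) : ℝ≥0∞)
        * ENNReal.ofReal ((b:ℝ) ^ (-(((2 * min α d + 1) * m : ℕ) : ℝ) * t)) ≤ 1 := by
  have hb0 : (0:ℝ) < b := by positivity
  have hb1 : (1:ℝ) ≤ b := by exact_mod_cast (by omega : 1 ≤ b)
  rw [← ENNReal.ofReal_natCast, ← ENNReal.ofReal_mul (Nat.cast_nonneg _)]
  apply ENNReal.ofReal_le_one.mpr
  have h1 : (b:ℝ) ^ (-(((2 * min α d + 1) * m : ℕ) : ℝ) * t) ≤ (b:ℝ) ^ (-((m:ℕ):ℝ)) := by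
    apply Real.rpow_le_rpow_of_exponent_le hb1
    have hc : (((2 * min α d + 1) * m : ℕ) : ℝ) = (((2 * min α d + 1 : ℕ)) : ℝ) * (m:ℝ) := by
      push_cast
      ring
    rw [hc]
    have hm0 : (0:ℝ) ≤ (m:ℝ) := Nat.cast_nonneg m
    nlinarith [hMt, hm0]
  have h2 : ((b ^ m - 1 : ℕ) : ℝ) ≤ (b:ℝ) ^ (m:ℕ) := by
    have h2' : ((b ^ m - 1 : ℕ) : ℝ) ≤ ((b ^ m : ℕ) : ℝ) := by
      exact_mod_cast Nat.sub_le _ _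
    calc ((b ^ m - 1 : ℕ) : ℝ) ≤ ((b ^ m : ℕ) : ℝ) := h2'
      _ = (b:ℝ) ^ (m:ℕ) := by push_cast; ring
  have h3 : (b:ℝ) ^ (-((m:ℕ):ℝ)) = ((b:ℝ) ^ (m:ℕ))⁻¹ := by
    rw [Real.rpow_neg hb0.le, Real.rpow_natCast]
  have hbm : (0:ℝ) < (b:ℝ) ^ (m:ℕ) := by positivity
  calc ((b ^ m - 1 : ℕ) : ℝ) * (b:ℝ) ^ (-(((2 * min α d + 1) * m : ℕ) : ℝ) * t)
      ≤ ((b ^ m - 1 : ℕ) : ℝ) * (b:ℝ) ^ (-((m:ℕ):ℝ)) :=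
        mul_le_mul_of_nonneg_left h1 (Nat.cast_nonneg _)
    _ ≤ (b:ℝ) ^ (m:ℕ) * ((b:ℝ) ^ (m:ℕ))⁻¹ := by
        rw [h3]
        exact mul_le_mul_of_nonneg_right h2 (by positivity)
    _ = 1 := mul_inv_cancel₀ hbm.ne'

lemma tsum_if_trunc_eq_zero (hb : Nat.Prime b) (t : ℝ) :
    (∑' k : ℕ, (if trunc b m k = 0 then hE b α d t k else 0))
      = ENNReal.ofReal ((b:ℝ) ^ (-(((2 * min α d + 1) * m : ℕ) : ℝ) * t))
          * ∑' k, hE b α d t k := by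
  rw [← ENNReal.tsum_mul_left]
  have hbm : 0 < b ^ m := Nat.pow_pos hb.pos
  have hinj : Function.Injective (fun k : ℕ => b ^ m * k) := fun x y h =>
    Nat.eq_of_mul_eq_mul_left hbm h
  rw [← Function.Injective.tsum_eq hinj
    (f := fun k => if trunc b m k = 0 then hE b α d t k else 0) ?_]
  · apply tsum_congr
    intro k
    rw [if_pos ((trunc_eq_zero_iff hb m _).mpr ⟨k, rfl⟩), hE_pow_mul hb.two_le t m k]
  · intro x hx
    rw [Function.mem_support] at hx
    by_cases h0 : trunc b m x = 0
    · obtain ⟨c, hc⟩ := (trunc_eq_zero_iff hb m x).mp h0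
      exact ⟨c, hc.symm⟩
    · exact absurd (if_neg h0) hx

def phiS (b m : ℕ) (c : Fin m → ZMod b) : Polynomial (ZMod b) :=
  ∑ i : Fin m, Polynomial.monomial i.val (c i)

lemma phiS_coeff (c : Fin m → ZMod b) (i : Fin m) : (phiS b m c).coeff (i : ℕ) = c i := by
  unfold phiS
  rw [Polynomial.finset_sum_coeff, Finset.sum_eq_single i]
  · rw [Polynomial.coeff_monomial, if_pos rfl]
  · intro j _ hji
    rw [Polynomial.coeff_monomial, if_neg]
    exact fun h => hji (Fin.val_injective h)
  · intro h
    exact absurd (Finset.mem_univ i) h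

lemma phiS_inj : Function.Injective (phiS b m) := by
  intro c c' h
  funext i
  rw [← phiS_coeff c i, ← phiS_coeff c' i, h]

lemma phiS_degree_lt (c : Fin m → ZMod b) : (phiS b m c).degree < (m : WithBot ℕ) := by
  apply lt_of_le_of_lt (Polynomial.degree_sum_le _ _)
  rw [Finset.sup_lt_iff (α := WithBot ℕ) (by exact WithBot.bot_lt_coe m)]
  intro i _
  exact lt_of_le_of_lt (Polynomial.degree_monomial_le _ _) (by exact_mod_cast i.isLt)

def Sfin (b m : ℕ) [NeZero b] : Finset (Polynomial (ZMod b)) :=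
  (Finset.univ.filter fun c : Fin m → ZMod b => c ≠ 0).image (phiS b m)

lemma mem_Sfin [NeZero b] {qt : Polynomial (ZMod b)} (h : qt ∈ Sfin b m) :
    qt ≠ 0 ∧ qt.degree < (m : WithBot ℕ) := by
  obtain ⟨c, hc, rfl⟩ := Finset.mem_image.mp h
  have hc0 : c ≠ 0 := (Finset.mem_filter.mp hc).2
  constructor
  · intro h0
    apply hc0
    apply phiS_inj
    rw [h0]
    unfold phiS
    simp
  · exact phiS_degree_lt c

lemma Sfin_card [NeZero b] (hb : Nat.Prime b) : (Sfin b m).card = b ^ m - 1 := by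
  unfold Sfin
  rw [Finset.card_image_of_injective _ phiS_inj]
  have heq : (Finset.univ.filter fun c : Fin m → ZMod b => c ≠ 0) = Finset.univ.erase 0 := by
    ext c
    simp [Finset.mem_erase, and_comm]
  rw [heq, Finset.card_erase_of_mem (Finset.mem_univ 0), Finset.card_univ]
  rw [Fintype.card_fun, ZMod.card b, Fintype.card_fin]

lemma Sfin_nonempty [NeZero b] (hb : Nat.Prime b) (hm : 1 ≤ m) : (Sfin b m).Nonempty := by
  apply Finset.card_pos.mp
  rw [Sfin_card hb]
  have h2 : 2 ≤ b := hb.two_le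
  have h3 : b ≤ b ^ m := Nat.le_self_pow (by omega) b
  omega

lemma p_not_dvd [Fact (Nat.Prime b)] {p g : Polynomial (ZMod b)}
    (hdeg : p.degree = (m : WithBot ℕ)) (hg0 : g ≠ 0)
    (hgdeg : g.degree < (m : WithBot ℕ)) : ¬ p ∣ g := fun hdvd =>
  hg0 (Polynomial.eq_zero_of_dvd_of_degree_lt hdvd (by rw [hdeg]; exact hgdeg))

lemma inner_count_le [NeZero b] [Fact (Nat.Prime b)] (hbp : Nat.Prime b) (hm : 1 ≤ m)
    {p : Polynomial (ZMod b)} (hp : Irreducible p) (hdeg : p.degree = (m : WithBot ℕ))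
    (σ : Polynomial (ZMod b)) {t : ℝ}
    (hMt1 : 1 ≤ (((2 * min α d + 1 : ℕ)) : ℝ) * t) :
    ∑' k2 : ℕ, ((((Sfin b m).filter fun qt => p ∣ (σ + trunc b m k2 * qt)).card : ℝ≥0∞)
        * hE b α d t k2) ≤ ∑' k, hE b α d t k := by
  have hprime : Prime p := hp.prime
  by_cases hσ : p ∣ σ
  · have hterm : ∀ k2 : ℕ,
        ((((Sfin b m).filter fun qt => p ∣ (σ + trunc b m k2 * qt)).card : ℝ≥0∞)
            * hE b α d t k2)
          ≤ ((b ^ m - 1 : ℕ) : ℝ≥0∞) * (if trunc b m k2 = 0 then hE b α d t k2 else 0) := by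
      intro k2
      by_cases h0 : trunc b m k2 = 0
      · rw [if_pos h0]
        apply mul_le_mul_left
        apply Nat.cast_le.mpr
        calc ((Sfin b m).filter fun qt => p ∣ (σ + trunc b m k2 * qt)).card
            ≤ (Sfin b m).card := Finset.card_filter_le _ _
          _ = b ^ m - 1 := Sfin_card hbp
      · rw [if_neg h0, mul_zero]
        have hempty : ((Sfin b m).filter fun qt => p ∣ (σ + trunc b m k2 * qt)) = ∅ := by
          rw [Finset.filter_eq_empty_iff]
          intro qt hqt hdvd
          have h1 : p ∣ trunc b m k2 * qt := (dvd_add_right hσ).mp hdvd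
          rcases hprime.2.2 _ _ h1 with hc | hq
          · exact (p_not_dvd hdeg h0 (trunc_degree_lt b m k2)) hc
          · obtain ⟨hq0, hqd⟩ := mem_Sfin hqt
            exact (p_not_dvd hdeg hq0 hqd) hq
        rw [hempty]
        simp
    calc ∑' k2 : ℕ, ((((Sfin b m).filter fun qt => p ∣ (σ + trunc b m k2 * qt)).card : ℝ≥0∞)
            * hE b α d t k2)
        ≤ ∑' k2 : ℕ, ((b ^ m - 1 : ℕ) : ℝ≥0∞)
            * (if trunc b m k2 = 0 then hE b α d t k2 else 0) := ENNReal.tsum_le_tsum hterm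
      _ = ((b ^ m - 1 : ℕ) : ℝ≥0∞)
            * ∑' k2 : ℕ, (if trunc b m k2 = 0 then hE b α d t k2 else 0) :=
          ENNReal.tsum_mul_left
      _ = (((b ^ m - 1 : ℕ) : ℝ≥0∞)
            * ENNReal.ofReal ((b:ℝ) ^ (-(((2 * min α d + 1) * m : ℕ) : ℝ) * t)))
            * ∑' k, hE b α d t k := by
          rw [tsum_if_trunc_eq_zero hbp t, ← mul_assoc]
      _ ≤ 1 * ∑' k, hE b α d t k :=
          mul_le_mul_left (card_mul_hE_le hbp.two_le hMt1) _
      _ = ∑' k, hE b α d t k := one_mul _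
  · have hterm : ∀ k2 : ℕ,
        ((((Sfin b m).filter fun qt => p ∣ (σ + trunc b m k2 * qt)).card : ℝ≥0∞)
            * hE b α d t k2) ≤ hE b α d t k2 := by
      intro k2
      have hcard : ((Sfin b m).filter fun qt => p ∣ (σ + trunc b m k2 * qt)).card ≤ 1 := by
        rw [Finset.card_le_one]
        intro q1 h1 q2 h2
        obtain ⟨hq1S, hd1⟩ := Finset.mem_filter.mp h1
        obtain ⟨hq2S, hd2⟩ := Finset.mem_filter.mp h2
        by_cases hc : trunc b m k2 = 0
        · exfalso
          apply hσ
          rw [hc, zero_mul, add_zero] at hd1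
          exact hd1
        · have hdiff : p ∣ trunc b m k2 * (q1 - q2) := by
            have hsub := dvd_sub hd1 hd2
            have heq : (σ + trunc b m k2 * q1) - (σ + trunc b m k2 * q2)
                = trunc b m k2 * (q1 - q2) := by ring
            rwa [heq] at hsub
          rcases hprime.2.2 _ _ hdiff with hcc | hqq
          · exact absurd hcc (p_not_dvd hdeg hc (trunc_degree_lt b m k2))
          · have hdeg12 : (q1 - q2).degree < (m : WithBot ℕ) :=
              lt_of_le_of_lt (Polynomial.degree_sub_le _ _)
                (max_lt (mem_Sfin hq1S).2 (mem_Sfin hq2S).2)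
            have hz := Polynomial.eq_zero_of_dvd_of_degree_lt hqq
              (by rw [hdeg]; exact hdeg12)
            exact sub_eq_zero.mp hz
      calc ((((Sfin b m).filter fun qt => p ∣ (σ + trunc b m k2 * qt)).card : ℝ≥0∞)
              * hE b α d t k2)
          ≤ 1 * hE b α d t k2 :=
            mul_le_mul_left (by exact_mod_cast hcard) _
        _ = hE b α d t k2 := one_mul _
    exact ENNReal.tsum_le_tsum hterm

lemma sum_S_tsum_le [NeZero b] [Fact (Nat.Prime b)] (hbp : Nat.Prime b) (hm : 1 ≤ m)
    {p : Polynomial (ZMod b)} (hp : Irreducible p) (hdeg : p.degree = (m : WithBot ℕ))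
    (q : ℕ → Polynomial (ZMod b)) (u : Finset ℕ) {t : ℝ}
    (hMt1 : 1 ≤ (((2 * min α d + 1 : ℕ)) : ℝ) * t) :
    ∑ qt ∈ Sfin b m, ∑' kk : (↥u → ℕ) × ℕ,
        ((if p ∣ ((∑ j, trunc b m (kk.1 j) * q (j : ℕ)) + trunc b m kk.2 * qt) then 1 else 0)
          * ((∏ j, hE b α d t (kk.1 j)) * hE b α d t kk.2))
      ≤ (∑' k, hE b α d t k) ^ (u.card + 1) := by
  rw [← Summable.tsum_finsetSum (fun qt _ => ENNReal.summable)]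
  have hcount : ∀ kk : (↥u → ℕ) × ℕ,
      (∑ qt ∈ Sfin b m,
        ((if p ∣ ((∑ j, trunc b m (kk.1 j) * q (j : ℕ)) + trunc b m kk.2 * qt) then (1:ℝ≥0∞) else 0)
          * ((∏ j, hE b α d t (kk.1 j)) * hE b α d t kk.2)))
        = (((Sfin b m).filter fun qt =>
              p ∣ ((∑ j, trunc b m (kk.1 j) * q (j : ℕ)) + trunc b m kk.2 * qt)).card : ℝ≥0∞)
            * ((∏ j, hE b α d t (kk.1 j)) * hE b α d t kk.2) := by
    intro kk
    rw [← Finset.sum_mul]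
    congr 1
    rw [Finset.sum_boole]
  rw [tsum_congr hcount, ENNReal.tsum_prod']
  have hstep : ∀ k1 : ↥u → ℕ,
      (∑' k2 : ℕ, (((Sfin b m).filter fun qt =>
            p ∣ ((∑ j, trunc b m (k1 j) * q (j : ℕ)) + trunc b m k2 * qt)).card : ℝ≥0∞)
          * ((∏ j, hE b α d t (k1 j)) * hE b α d t k2))
        ≤ (∏ j, hE b α d t (k1 j)) * ∑' k, hE b α d t k := by
    intro k1
    have hre : ∀ k2 : ℕ, (((Sfin b m).filter fun qt =>
            p ∣ ((∑ j, trunc b m (k1 j) * q (j : ℕ)) + trunc b m k2 * qt)).card : ℝ≥0∞)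
          * ((∏ j, hE b α d t (k1 j)) * hE b α d t k2)
        = (∏ j, hE b α d t (k1 j)) * ((((Sfin b m).filter fun qt =>
            p ∣ ((∑ j, trunc b m (k1 j) * q (j : ℕ)) + trunc b m k2 * qt)).card : ℝ≥0∞)
          * hE b α d t k2) := by
      intro k2
      ring
    rw [tsum_congr hre, ENNReal.tsum_mul_left]
    exact mul_le_mul_right (inner_count_le hbp hm hp hdeg _ hMt1) _
  calc (∑' (k1 : ↥u → ℕ) (k2 : ℕ), (((Sfin b m).filter fun qt =>
            p ∣ ((∑ j, trunc b m (k1 j) * q (j : ℕ)) + trunc b m k2 * qt)).card : ℝ≥0∞)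
          * ((∏ j, hE b α d t (k1 j)) * hE b α d t k2))
      ≤ ∑' k1 : ↥u → ℕ, (∏ j, hE b α d t (k1 j)) * ∑' k, hE b α d t k :=
        ENNReal.tsum_le_tsum hstep
    _ = (∑' k1 : ↥u → ℕ, ∏ j, hE b α d t (k1 j)) * ∑' k, hE b α d t k :=
        ENNReal.tsum_mul_right
    _ = (∑' k, hE b α d t k) ^ (u.card) * ∑' k, hE b α d t k := by
        rw [tsum_pi_prod, Fintype.card_coe]
    _ = (∑' k, hE b α d t k) ^ (u.card + 1) := by rw [pow_succ]

end AuxD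

section AuxE
variable {b α d m τ : ℕ}

def termf (b α d m : ℕ) (p : Polynomial (ZMod b)) (q : ℕ → Polynomial (ZMod b))
    (u : Finset ℕ) (qt : Polynomial (ZMod b)) (kk : (↥u → ℕ) × ℕ) : ℝ :=
  if (∀ j, 1 ≤ kk.1 j) ∧ 1 ≤ kk.2 ∧
      p ∣ ((∑ j, trunc b m (kk.1 j) * q (j : ℕ)) + trunc b m kk.2 * qt)
  then (∏ j, rfun b α d (kk.1 j)) * rfun b α d kk.2 else 0

lemma termf_nonneg (p : Polynomial (ZMod b)) (q : ℕ → Polynomial (ZMod b))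
    (u : Finset ℕ) (qt : Polynomial (ZMod b)) (kk : (↥u → ℕ) × ℕ) :
    0 ≤ termf b α d m p q u qt kk := by
  unfold termf
  split
  · exact mul_nonneg (Finset.prod_nonneg fun j _ => rfun_nonneg _) (rfun_nonneg _)
  · exact le_refl 0

lemma hE_zero (t : ℝ) : hE b α d t 0 = 0 := if_pos rfl

lemma hE_of_ne (t : ℝ) {k : ℕ} (hk : k ≠ 0) :
    hE b α d t k = ENNReal.ofReal (rfun b α d k ^ t) := if_neg hk

lemma ofReal_termf_rpow {lam : ℝ} (hlam0 : 0 < lam)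
    (p : Polynomial (ZMod b)) (q : ℕ → Polynomial (ZMod b))
    (u : Finset ℕ) (qt : Polynomial (ZMod b)) (kk : (↥u → ℕ) × ℕ) :
    (ENNReal.ofReal (termf b α d m p q u qt kk)) ^ lam
      = (if p ∣ ((∑ j, trunc b m (kk.1 j) * q (j : ℕ)) + trunc b m kk.2 * qt)
          then (1:ℝ≥0∞) else 0)
        * ((∏ j, hE b α d lam (kk.1 j)) * hE b α d lam kk.2) := by
  unfold termf
  by_cases hdvd : p ∣ ((∑ j, trunc b m (kk.1 j) * q (j : ℕ)) + trunc b m kk.2 * qt)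
  · rw [if_pos hdvd, one_mul]
    by_cases hks : (∀ j, 1 ≤ kk.1 j) ∧ 1 ≤ kk.2
    · rw [if_pos ⟨hks.1, hks.2, hdvd⟩]
      have h2 : kk.2 ≠ 0 := by have := hks.2; omega
      have hprod0 : 0 ≤ ∏ j, rfun b α d (kk.1 j) :=
        Finset.prod_nonneg fun j _ => rfun_nonneg _
      rw [ENNReal.ofReal_mul hprod0, ENNReal.mul_rpow_of_nonneg _ _ hlam0.le]
      congr 1
      · rw [ENNReal.ofReal_prod_of_nonneg fun j _ => rfun_nonneg _,
          prod_rpow_ennreal _ _ hlam0.le]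
        apply Finset.prod_congr rfl
        intro j _
        have hj : kk.1 j ≠ 0 := by have := hks.1 j; omega
        rw [hE_of_ne lam hj, ENNReal.ofReal_rpow_of_nonneg (rfun_nonneg _) hlam0.le]
      · rw [hE_of_ne lam h2, ENNReal.ofReal_rpow_of_nonneg (rfun_nonneg _) hlam0.le]
    · rw [if_neg (by tauto), ENNReal.ofReal_zero, ENNReal.zero_rpow_of_pos hlam0]
      rcases not_and_or.mp hks with h | h
      · push_neg at h
        obtain ⟨j0, hj0⟩ := h
        have hj0' : kk.1 j0 = 0 := by omega
        have hz : hE b α d lam (kk.1 j0) = 0 := by rw [hj0', hE_zero]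
        rw [Finset.prod_eq_zero (Finset.mem_univ j0) hz, zero_mul]
      · have h2 : kk.2 = 0 := by omega
        rw [h2, hE_zero, mul_zero]
  · rw [if_neg hdvd, zero_mul, if_neg (fun hc => hdvd hc.2.2), ENNReal.ofReal_zero,
      ENNReal.zero_rpow_of_pos hlam0]

end AuxE

theorem statement10 (b : ℕ) (hb : Nat.Prime b) (m s d α τ : ℕ)
    (hm : 1 ≤ m) (hs : 1 ≤ s) (hd : 1 ≤ d) (hα : 1 ≤ α)
    (hτ1 : 1 ≤ τ) (hτds : τ + 1 ≤ d * s)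
    (p : Polynomial (ZMod b)) (hp : Irreducible p) (hdeg : p.degree = (m : WithBot ℕ))
    (γ : Finset ℕ → ℝ) (hγ : ∀ w, 0 ≤ γ w)
    (lam : ℝ) (hlam1 : 1 / (2 * ((min α d : ℕ) : ℝ) + 1) < lam) (hlam2 : lam ≤ 1)
    (q : ℕ → Polynomial (ZMod b)) (hq : ∀ j, 1 ≤ j → j ≤ τ → Rbm b m (q j)) :
    ∃ qt : Polynomial (ZMod b), Rbm b m qt ∧
      theta b α d m τ γ p q qt ^ lam ≤
        (1 / ((b : ℝ) ^ m - 1)) *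
          ∑ u ∈ (Finset.Icc 1 τ).powerset,
            (4 : ℝ) ^ (lam * (((blk d (insert (τ + 1) u)).card * (d - α) : ℕ) : ℝ)) *
              γ (blk d (insert (τ + 1) u)) ^ lam * Ctilde b α d lam ^ (u.card + 1) := by
  haveI : Fact (Nat.Prime b) := ⟨hb⟩
  haveI : NeZero b := ⟨hb.ne_zero⟩
  have hb2 : 2 ≤ b := hb.two_le
  have hb0R : (0:ℝ) < b := by positivity
  have hb1R : (1:ℝ) < b := by exact_mod_cast hb2
  have hMpos : (0:ℝ) < 2 * ((min α d : ℕ) : ℝ) + 1 := by positivity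
  have hMcast : ((2 * min α d + 1 : ℕ) : ℝ) = 2 * ((min α d : ℕ) : ℝ) + 1 := by
    push_cast
    ring
  have hlam0 : 0 < lam := lt_trans (by positivity) hlam1
  have hMt : 1 < ((2 * min α d + 1 : ℕ) : ℝ) * lam := by
    rw [hMcast]
    rw [div_lt_iff₀ hMpos] at hlam1
    linarith
  have hMt1 : 1 ≤ ((2 * min α d + 1 : ℕ) : ℝ) * lam := hMt.le
  set Alam : ℝ := ((b:ℝ) - 1) / (1 - (b:ℝ) ^ ((1:ℝ) - ((2 * min α d + 1 : ℕ) : ℝ) * lam)) with hAlam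
  have hρ1 : (b:ℝ) ^ ((1:ℝ) - ((2 * min α d + 1 : ℕ) : ℝ) * lam) < 1 :=
    Real.rpow_lt_one_of_one_lt_of_neg hb1R (by linarith)
  have hρ0 : (0:ℝ) ≤ (b:ℝ) ^ ((1:ℝ) - ((2 * min α d + 1 : ℕ) : ℝ) * lam) :=
    Real.rpow_nonneg hb0R.le _
  have hA0 : 0 ≤ Alam := div_nonneg (by linarith) (by linarith)
  have hAC : Alam ≤ Ctilde b α d lam := by
    refine le_trans (le_of_eq ?_) (le_max_right _ _)
    rw [hAlam, hMcast]
  set P := (Finset.Icc 1 τ).powerset with hP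
  have hAinfle : (∑' k, hE b α d lam k) ≤ ENNReal.ofReal Alam := by
    rw [hAlam]
    exact tsum_hE_le hb2 hMt
  -- the per-u bound on the sum over the candidate set
  have hK : ∀ u : Finset ℕ, ∑ qt ∈ Sfin b m, (∑' kk : (↥u → ℕ) × ℕ,
      (ENNReal.ofReal (termf b α d m p q u qt kk)) ^ lam)
      ≤ (ENNReal.ofReal Alam) ^ (u.card + 1) := by
    intro u
    have h1 : ∀ qt : Polynomial (ZMod b),
        (∑' kk : (↥u → ℕ) × ℕ, (ENNReal.ofReal (termf b α d m p q u qt kk)) ^ lam)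
        = ∑' kk : (↥u → ℕ) × ℕ,
            ((if p ∣ ((∑ j, trunc b m (kk.1 j) * q (j : ℕ)) + trunc b m kk.2 * qt)
                then (1:ℝ≥0∞) else 0)
              * ((∏ j, hE b α d lam (kk.1 j)) * hE b α d lam kk.2)) := fun qt =>
      tsum_congr fun kk => ofReal_termf_rpow hlam0 p q u qt kk
    calc ∑ qt ∈ Sfin b m, (∑' kk : (↥u → ℕ) × ℕ,
          (ENNReal.ofReal (termf b α d m p q u qt kk)) ^ lam)
        = ∑ qt ∈ Sfin b m, ∑' kk : (↥u → ℕ) × ℕ,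
            ((if p ∣ ((∑ j, trunc b m (kk.1 j) * q (j : ℕ)) + trunc b m kk.2 * qt)
                then (1:ℝ≥0∞) else 0)
              * ((∏ j, hE b α d lam (kk.1 j)) * hE b α d lam kk.2)) :=
          Finset.sum_congr rfl (fun qt _ => h1 qt)
      _ ≤ (∑' k, hE b α d lam k) ^ (u.card + 1) := sum_S_tsum_le hb hm hp hdeg q u hMt1
      _ ≤ (ENNReal.ofReal Alam) ^ (u.card + 1) := pow_le_pow_left' hAinfle _
  have hGtop : ∀ u : Finset ℕ, ∀ qt ∈ Sfin b m,
      (∑' kk : (↥u → ℕ) × ℕ, (ENNReal.ofReal (termf b α d m p q u qt kk)) ^ lam) ≠ ⊤ := by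
    intro u qt hqt
    have hle : (∑' kk : (↥u → ℕ) × ℕ, (ENNReal.ofReal (termf b α d m p q u qt kk)) ^ lam)
        ≤ ∑ qt' ∈ Sfin b m, (∑' kk : (↥u → ℕ) × ℕ,
            (ENNReal.ofReal (termf b α d m p q u qt' kk)) ^ lam) :=
      Finset.single_le_sum (f := fun qt' => ∑' kk : (↥u → ℕ) × ℕ,
        (ENNReal.ofReal (termf b α d m p q u qt' kk)) ^ lam) (fun i _ => zero_le) hqt
    exact ne_top_of_le_ne_top (ENNReal.pow_ne_top ENNReal.ofReal_ne_top) (hle.trans (hK u))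
  -- pointwise Jensen bound
  have hθle : ∀ qt ∈ Sfin b m, theta b α d m τ γ p q qt ^ lam
      ≤ ∑ u ∈ P, ((4:ℝ) ^ ((blk d (insert (τ+1) u)).card * (d - α))
            * γ (blk d (insert (τ+1) u))) ^ lam
          * (∑' kk : (↥u → ℕ) × ℕ,
              (ENNReal.ofReal (termf b α d m p q u qt kk)) ^ lam).toReal := by
    intro qt hqt
    have hth : theta b α d m τ γ p q qt = ∑ u ∈ P,
        ((4:ℝ) ^ ((blk d (insert (τ+1) u)).card * (d - α)) * γ (blk d (insert (τ+1) u)))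
          * ∑' kk : (↥u → ℕ) × ℕ, termf b α d m p q u qt kk := rfl
    rw [hth]
    have hwT : ∀ u ∈ P, 0 ≤ ((4:ℝ) ^ ((blk d (insert (τ+1) u)).card * (d - α))
          * γ (blk d (insert (τ+1) u)))
        * ∑' kk : (↥u → ℕ) × ℕ, termf b α d m p q u qt kk := fun u _ =>
      mul_nonneg (mul_nonneg (by positivity) (hγ _))
        (tsum_nonneg fun kk => termf_nonneg p q u qt kk)
    refine le_trans (sum_rpow_le P _ hwT hlam0 hlam2) ?_
    apply Finset.sum_le_sum
    intro u hu
    have hw0 : 0 ≤ (4:ℝ) ^ ((blk d (insert (τ+1) u)).card * (d - α))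
        * γ (blk d (insert (τ+1) u)) := mul_nonneg (by positivity) (hγ _)
    have hT0 : 0 ≤ ∑' kk : (↥u → ℕ) × ℕ, termf b α d m p q u qt kk :=
      tsum_nonneg fun kk => termf_nonneg p q u qt kk
    rw [Real.mul_rpow hw0 hT0]
    apply mul_le_mul_of_nonneg_left ?_ (Real.rpow_nonneg hw0 lam)
    have hTG : (∑' kk : (↥u → ℕ) × ℕ, termf b α d m p q u qt kk)
        = (∑' kk : (↥u → ℕ) × ℕ, ENNReal.ofReal (termf b α d m p q u qt kk)).toReal :=
      tsum_toReal_ofReal _ (fun kk => termf_nonneg p q u qt kk)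
    rw [hTG]
    by_cases htop : (∑' kk : (↥u → ℕ) × ℕ, ENNReal.ofReal (termf b α d m p q u qt kk)) = ⊤
    · rw [htop]
      simp only [ENNReal.toReal_top]
      rw [Real.zero_rpow hlam0.ne']
      exact ENNReal.toReal_nonneg
    · rw [ENNReal.toReal_rpow]
      apply ENNReal.toReal_mono (hGtop u qt hqt)
      exact tsum_rpow_le _ hlam0 hlam2 htop
  -- summing over the candidate set
  have hsumZ : ∑ qt ∈ Sfin b m, theta b α d m τ γ p q qt ^ lam
      ≤ ∑ u ∈ P,
          (4 : ℝ) ^ (lam * (((blk d (insert (τ + 1) u)).card * (d - α) : ℕ) : ℝ)) *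
            γ (blk d (insert (τ + 1) u)) ^ lam * Ctilde b α d lam ^ (u.card + 1) := by
    calc ∑ qt ∈ Sfin b m, theta b α d m τ γ p q qt ^ lam
        ≤ ∑ qt ∈ Sfin b m, ∑ u ∈ P,
            ((4:ℝ) ^ ((blk d (insert (τ+1) u)).card * (d - α))
              * γ (blk d (insert (τ+1) u))) ^ lam
            * (∑' kk : (↥u → ℕ) × ℕ,
                (ENNReal.ofReal (termf b α d m p q u qt kk)) ^ lam).toReal :=
          Finset.sum_le_sum (fun qt hqt => hθle qt hqt)
      _ = ∑ u ∈ P, ((4:ℝ) ^ ((blk d (insert (τ+1) u)).card * (d - α))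
              * γ (blk d (insert (τ+1) u))) ^ lam
            * ∑ qt ∈ Sfin b m, (∑' kk : (↥u → ℕ) × ℕ,
                (ENNReal.ofReal (termf b α d m p q u qt kk)) ^ lam).toReal := by
          rw [Finset.sum_comm]
          exact Finset.sum_congr rfl (fun u _ => (Finset.mul_sum _ _ _).symm)
      _ ≤ _ := ?_
    apply Finset.sum_le_sum
    intro u hu
    have hw0 : 0 ≤ (4:ℝ) ^ ((blk d (insert (τ+1) u)).card * (d - α))
        * γ (blk d (insert (τ+1) u)) := mul_nonneg (by positivity) (hγ _)
    have hsum_toReal : ∑ qt ∈ Sfin b m, (∑' kk : (↥u → ℕ) × ℕ,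
        (ENNReal.ofReal (termf b α d m p q u qt kk)) ^ lam).toReal
        ≤ Ctilde b α d lam ^ (u.card + 1) := by
      rw [← ENNReal.toReal_sum (fun qt hqt => hGtop u qt hqt)]
      calc (∑ qt ∈ Sfin b m, ∑' kk : (↥u → ℕ) × ℕ,
            (ENNReal.ofReal (termf b α d m p q u qt kk)) ^ lam).toReal
          ≤ ((ENNReal.ofReal Alam) ^ (u.card + 1)).toReal :=
            ENNReal.toReal_mono (ENNReal.pow_ne_top ENNReal.ofReal_ne_top) (hK u)
        _ = Alam ^ (u.card + 1) := by
            rw [ENNReal.toReal_pow, ENNReal.toReal_ofReal hA0]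
        _ ≤ Ctilde b α d lam ^ (u.card + 1) := pow_le_pow_left₀ hA0 hAC _
    have hwsplit : ((4:ℝ) ^ ((blk d (insert (τ+1) u)).card * (d - α))
          * γ (blk d (insert (τ+1) u))) ^ lam
        = (4 : ℝ) ^ (lam * (((blk d (insert (τ + 1) u)).card * (d - α) : ℕ) : ℝ)) *
            γ (blk d (insert (τ + 1) u)) ^ lam := by
      rw [Real.mul_rpow (by positivity) (hγ _)]
      congr 1
      rw [mul_comm lam _, Real.rpow_natCast_mul (by norm_num : (0:ℝ) ≤ 4)]
    calc ((4:ℝ) ^ ((blk d (insert (τ+1) u)).card * (d - α))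
            * γ (blk d (insert (τ+1) u))) ^ lam
          * ∑ qt ∈ Sfin b m, (∑' kk : (↥u → ℕ) × ℕ,
              (ENNReal.ofReal (termf b α d m p q u qt kk)) ^ lam).toReal
        ≤ ((4:ℝ) ^ ((blk d (insert (τ+1) u)).card * (d - α))
            * γ (blk d (insert (τ+1) u))) ^ lam * (Ctilde b α d lam ^ (u.card + 1)) :=
          mul_le_mul_of_nonneg_left hsum_toReal (Real.rpow_nonneg hw0 lam)
      _ = (4 : ℝ) ^ (lam * (((blk d (insert (τ + 1) u)).card * (d - α) : ℕ) : ℝ)) *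
            γ (blk d (insert (τ + 1) u)) ^ lam * Ctilde b α d lam ^ (u.card + 1) := by
          rw [hwsplit, mul_assoc]
  -- conclude by averaging
  have hSne := Sfin_nonempty hb hm
  have hbm2 : (2:ℝ) ≤ (b:ℝ) ^ m := by
    calc (2:ℝ) ≤ (b:ℝ) := by exact_mod_cast hb2
      _ ≤ (b:ℝ) ^ m := le_self_pow₀ hb1R.le (by omega)
  have hne : (b:ℝ) ^ m - 1 ≠ 0 := by linarith
  have hcardR : (((Sfin b m).card : ℕ) : ℝ) = (b:ℝ) ^ m - 1 := by
    rw [Sfin_card hb]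
    have h1 : 1 ≤ b ^ m := Nat.one_le_pow m b (by omega)
    push_cast [Nat.cast_sub h1]
    ring
  have hfin : ∑ qt ∈ Sfin b m, theta b α d m τ γ p q qt ^ lam
      ≤ ∑ _qt ∈ Sfin b m, (1 / ((b : ℝ) ^ m - 1)) *
          ∑ u ∈ P,
            (4 : ℝ) ^ (lam * (((blk d (insert (τ + 1) u)).card * (d - α) : ℕ) : ℝ)) *
              γ (blk d (insert (τ + 1) u)) ^ lam * Ctilde b α d lam ^ (u.card + 1) := by
    rw [Finset.sum_const, nsmul_eq_mul, hcardR]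
    have hrw : ((b:ℝ) ^ m - 1) * ((1 / ((b : ℝ) ^ m - 1)) *
        ∑ u ∈ P,
            (4 : ℝ) ^ (lam * (((blk d (insert (τ + 1) u)).card * (d - α) : ℕ) : ℝ)) *
              γ (blk d (insert (τ + 1) u)) ^ lam * Ctilde b α d lam ^ (u.card + 1))
        = ∑ u ∈ P,
            (4 : ℝ) ^ (lam * (((blk d (insert (τ + 1) u)).card * (d - α) : ℕ) : ℝ)) *
              γ (blk d (insert (τ + 1) u)) ^ lam * Ctilde b α d lam ^ (u.card + 1) := by
      field_simp
    rw [hrw]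
    exact hsumZ
  obtain ⟨qt, hqtS, hqt⟩ := Finset.exists_le_of_sum_le hSne hfin
  exact ⟨qt, ⟨(mem_Sfin hqtS).1, (mem_Sfin hqtS).2⟩, hqt⟩

end ISPLR
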